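/- Block-diagonal Jacobian structure and lossless error propagation under manifold attractor regularization (MAR limit). Let φ : ℝ → ℝ be differentiable, let M = M_s + M_r, and identify ℝ^M ≅ ℝ^{M_s} × ℝ^{M_r}, writing z = (z^{(s)}, z^{(r)}). Let A_s be an M_s×M_s real matrix, W_s an M_s×L matrix, V_s an L×M_s matrix, b ∈ ℝ^L, and h ∈ ℝ^M, and define the MAR-limit map F : ℝ^M → ℝ^M by F(z) = A·z + W·φ.(V·z + b) + h, where A is the block matrix fromBlocks A_s 0 0 I_{M_r}, W stacks W_s over an M_r×L zero block, V = [V_s | 0_{L×M_r}], and φ.(·) denotes componentwise application. Then F is differentiable, and for every z ∈ ℝ^M its Jacobian equals the block-diagonal matrix fromBlocks (A_s + W_s·D(z)·V_s) 0 0 I_{M_r}, where D(z) = diag(φ'((V_s·z^{(s)} + b)_1), …, φ'((V_s·z^{(s)} + b)_L)). Consequently, for any points z(0), …, z(t−1), the time-ordered product of Jacobians ∏_{k=0}^{t−1} J_F(z(t−1−k)) equals fromBlocks (∏_{k=0}^{t−1} [A_s + W_s·D(z(t−1−k))·V_s]) 0 0 I_{M_r}: error signals propagate without decay or amplification along the M_r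 regularized directions. -/

import Mathlib

open Matrix

/-- Time-ordered composition of continuous linear maps:
`clmCocycle Jf t = Jf (t-1) ∘L ⋯ ∘L Jf 0` (and the identity for `t = 0`), i.e.
`∏_{k=0}^{t-1} Jf (t-1-k)`. -/
def clmCocycle {E : Type*} [NormedAddCommGroup E] [NormedSpace ℝ E]
    (Jf : ℕ → (E →L[ℝ] E)) : ℕ → (E →L[ℝ] E)
  | 0 => ContinuousLinearMap.id ℝ E
  | (t + 1) => (Jf t).comp (clmCocycle Jf t)

/-- Time-ordered product of matrices: `matCocycle Jm t = Jm (t-1) * ⋯ * Jm 0`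
(and `1` for `t = 0`), i.e. `∏_{k=0}^{t-1} Jm (t-1-k)`. -/
def matCocycle {Ms : ℕ} (Jm : ℕ → Matrix (Fin Ms) (Fin Ms) ℝ) :
    ℕ → Matrix (Fin Ms) (Fin Ms) ℝ
  | 0 => 1
  | (t + 1) => Jm t * matCocycle Jm t

/-- **Block-diagonal Jacobian structure under manifold attractor regularization (MAR
limit).** Identifying `ℝ^M ≅ ℝ^{M_s} × ℝ^{M_r}`, the MAR-limit map
`F(z) = (A_s z⁽ˢ⁾ + W_s φ.(V_s z⁽ˢ⁾ + b) + h⁽ˢ⁾, z⁽ʳ⁾ + h⁽ʳ⁾)` (i.e.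
`F(z) = A z + W φ.(V z + b) + h` with `A = fromBlocks A_s 0 0 I`, `W = [W_s; 0]`,
`V = [V_s | 0]`) is differentiable with block-diagonal Jacobian
`fromBlocks (A_s + W_s D(z) V_s) 0 0 I`, and the time-ordered Jacobian products
decompose blockwise, so error signals propagate without decay or amplification along the
`M_r` regularized directions. -/
theorem mar_blockdiagonal_jacobian (Ms Mr L : ℕ)
    (φ : ℝ → ℝ) (hφ : Differentiable ℝ φ)
    (As : Matrix (Fin Ms) (Fin Ms) ℝ) (Ws : Matrix (Fin Ms) (Fin L) ℝ)
    (Vs : Matrix (Fin L) (Fin Ms) ℝ) (b : Fin L → ℝ)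
    (h : (Fin Ms → ℝ) × (Fin Mr → ℝ))
    (F : (Fin Ms → ℝ) × (Fin Mr → ℝ) → (Fin Ms → ℝ) × (Fin Mr → ℝ))
    (hF : ∀ z : (Fin Ms → ℝ) × (Fin Mr → ℝ),
      F z = (As.mulVec z.1 + Ws.mulVec (fun l => φ ((Vs.mulVec z.1 + b) l)) + h.1,
             z.2 + h.2))
    (D : (Fin Ms → ℝ) × (Fin Mr → ℝ) → Matrix (Fin L) (Fin L) ℝ)
    (hD : ∀ z, D z = Matrix.diagonal (fun l => deriv φ ((Vs.mulVec z.1 + b) l))) :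
    Differentiable ℝ F ∧
    (∀ z : (Fin Ms → ℝ) × (Fin Mr → ℝ),
      fderiv ℝ F z =
        ((As + Ws * D z * Vs).mulVecLin.toContinuousLinearMap).prodMap
          (ContinuousLinearMap.id ℝ (Fin Mr → ℝ))) ∧
    (∀ (t : ℕ) (zs : ℕ → (Fin Ms → ℝ) × (Fin Mr → ℝ)),
      clmCocycle (fun k => fderiv ℝ F (zs k)) t =
        ((matCocycle (fun k => As + Ws * D (zs k) * Vs) t).mulVecLin.toContinuousLinearMap).prodMap
          (ContinuousLinearMap.id ℝ (Fin Mr → ℝ))) := by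

  classical
  have hFfun : F = fun z : (Fin Ms → ℝ) × (Fin Mr → ℝ) =>
      (As.mulVec z.1 + Ws.mulVec (fun l => φ ((Vs.mulVec z.1 + b) l)) + h.1,
       z.2 + h.2) := funext hF
  have key : ∀ z : (Fin Ms → ℝ) × (Fin Mr → ℝ),
      HasFDerivAt F
        (((As + Ws * D z * Vs).mulVecLin.toContinuousLinearMap).prodMap
          (ContinuousLinearMap.id ℝ (Fin Mr → ℝ))) z := by
    intro z
    -- derivative of the nonlinearity
    have hg : HasFDerivAt (fun w : (Fin Ms → ℝ) × (Fin Mr → ℝ) =>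
        (fun l => φ ((Vs.mulVec w.1 + b) l)))
        (((D z * Vs).mulVecLin.toContinuousLinearMap).comp
          (ContinuousLinearMap.fst ℝ (Fin Ms → ℝ) (Fin Mr → ℝ))) z := by
      rw [hasFDerivAt_pi']
      intro l
      have hinner : HasFDerivAt
          (fun w : (Fin Ms → ℝ) × (Fin Mr → ℝ) => (Vs.mulVec w.1 + b) l)
          (((ContinuousLinearMap.proj l).comp Vs.mulVecLin.toContinuousLinearMap).comp
            (ContinuousLinearMap.fst ℝ (Fin Ms → ℝ) (Fin Mr → ℝ))) z := by
        have := ((((ContinuousLinearMap.proj l).comp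
            Vs.mulVecLin.toContinuousLinearMap).comp
            (ContinuousLinearMap.fst ℝ (Fin Ms → ℝ) (Fin Mr → ℝ))).hasFDerivAt
            (x := z)).add_const (b l)
        exact this
      have houter : HasDerivAt φ (deriv φ ((Vs.mulVec z.1 + b) l)) ((Vs.mulVec z.1 + b) l) :=
        (hφ _).hasDerivAt
      have := houter.comp_hasFDerivAt z hinner
      refine this.congr_fderiv ?_
      refine ContinuousLinearMap.ext fun v => ?_
      simp [hD, Matrix.mulVec, Matrix.mul_apply, Matrix.diagonal, dotProduct,
        Finset.mul_sum, Finset.sum_mul]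
      exact Finset.sum_congr rfl fun j _ => by ring
    have h1 : HasFDerivAt (fun w : (Fin Ms → ℝ) × (Fin Mr → ℝ) =>
        As.mulVec w.1 + Ws.mulVec (fun l => φ ((Vs.mulVec w.1 + b) l)) + h.1)
        ((As.mulVecLin.toContinuousLinearMap.comp
            (ContinuousLinearMap.fst ℝ (Fin Ms → ℝ) (Fin Mr → ℝ))) +
          Ws.mulVecLin.toContinuousLinearMap.comp
            (((D z * Vs).mulVecLin.toContinuousLinearMap).comp
              (ContinuousLinearMap.fst ℝ (Fin Ms → ℝ) (Fin Mr → ℝ)))) z := by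
      have hlin : HasFDerivAt (fun w : (Fin Ms → ℝ) × (Fin Mr → ℝ) => As.mulVec w.1)
          (As.mulVecLin.toContinuousLinearMap.comp
            (ContinuousLinearMap.fst ℝ (Fin Ms → ℝ) (Fin Mr → ℝ))) z :=
        (As.mulVecLin.toContinuousLinearMap.comp
          (ContinuousLinearMap.fst ℝ (Fin Ms → ℝ) (Fin Mr → ℝ))).hasFDerivAt
      have hWg := (Ws.mulVecLin.toContinuousLinearMap.hasFDerivAt
          (x := fun l => φ ((Vs.mulVec z.1 + b) l))).comp z hg
      exact (hlin.add hWg).add_const h.1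
    have h2 : HasFDerivAt (fun w : (Fin Ms → ℝ) × (Fin Mr → ℝ) => w.2 + h.2)
        (ContinuousLinearMap.snd ℝ (Fin Ms → ℝ) (Fin Mr → ℝ)) z :=
      (hasFDerivAt_snd).add_const h.2
    have htot := h1.prodMk h2
    rw [hFfun]
    refine htot.congr_fderiv ?_
    refine ContinuousLinearMap.ext fun v => Prod.ext ?_ ?_
    · simp [Matrix.add_mulVec, ← Matrix.mulVec_mulVec]
    · simp
  have hfd : ∀ z : (Fin Ms → ℝ) × (Fin Mr → ℝ),
      fderiv ℝ F z =
        ((As + Ws * D z * Vs).mulVecLin.toContinuousLinearMap).prodMap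
          (ContinuousLinearMap.id ℝ (Fin Mr → ℝ)) := fun z => (key z).fderiv
  refine ⟨fun z => (key z).differentiableAt, hfd, ?_⟩
  intro t zs
  induction t with
  | zero =>
      refine ContinuousLinearMap.ext fun v => Prod.ext ?_ ?_ <;>
        simp [clmCocycle, matCocycle]
  | succ t ih =>
      simp only [clmCocycle, matCocycle, ih, hfd (zs t)]
      refine ContinuousLinearMap.ext fun v => Prod.ext ?_ ?_
      · simp [← Matrix.mulVec_mulVec]
      · simp
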